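/- Let T be a tree isomorphic to Q(r,2,0) with r ≥ 1 or to Q(0,1,1). Then χ'_s(T) = n_1(T) + 1. -/

import Mathlib

open SimpleGraph

variable {V : Type*}

/-- A vertex distinguishing proper edge `k`-coloring (vdec): a proper edge coloring
(edges sharing an endpoint get different colors) such that distinct vertices have
distinct sets of colors on their incident edges. -/
def IsVDEC (G : SimpleGraph V) (k : ℕ) (c : Sym2 V → Fin k) : Prop :=
  (∀ ⦃u v w : V⦄, G.Adj u v → G.Adj u w → v ≠ w → c s(u, v) ≠ c s(u, w)) ∧
  (∀ u v : V, u ≠ v →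
    {i : Fin k | ∃ w, G.Adj u w ∧ c s(u, w) = i} ≠
    {i : Fin k | ∃ w, G.Adj v w ∧ c s(v, w) = i})

/-- `χ'ₛ(G)`: the minimum number of colors in a vdec of `G`. -/
noncomputable def vdecNum (G : SimpleGraph V) : ℕ :=
  sInf {k : ℕ | ∃ c : Sym2 V → Fin k, IsVDEC G k c}

/-- `n_d(G)`: the number of vertices of degree `d` in `G`. -/
noncomputable def numDeg (G : SimpleGraph V) (d : ℕ) : ℕ :=
  Nat.card {v : V // Nat.card (G.neighborSet v) = d}

/-- Vertex type of the tree `Q(r,m,n)`: the center `w₀`, the leaves `w₁,…,w_r`,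
the pairs `sᵢ, s'ᵢ` (encoded as `(i,0)` and `(i,1)`), the vertices `t₁,…,tₙ`,
and the leaves `t'_{i,j}` for `j < rv i`. -/
abbrev QVert (r m n : ℕ) (rv : Fin n → ℕ) : Type :=
  Unit ⊕ Fin r ⊕ (Fin m × Fin 2) ⊕ (Fin n ⊕ Σ i : Fin n, Fin (rv i))

/-- The tree `Q(r,m,n)` of diameter four: the center `w₀` is adjacent to the `r` leaves
`wᵢ`, to the `m` vertices `sᵢ` (each `sᵢ` having one further leaf neighbor `s'ᵢ`),
and to the `n` vertices `tᵢ`, where `tᵢ` has `rv i` further neighbors, all leaves. -/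
def QGraph (r m n : ℕ) (rv : Fin n → ℕ) : SimpleGraph (QVert r m n rv) :=
  SimpleGraph.fromRel (fun a b =>
    (a = Sum.inl () ∧
      ((∃ i, b = Sum.inr (Sum.inl i)) ∨
       (∃ i, b = Sum.inr (Sum.inr (Sum.inl (i, (0 : Fin 2))))) ∨
       (∃ i, b = Sum.inr (Sum.inr (Sum.inr (Sum.inl i)))))) ∨
    (∃ i : Fin m, a = Sum.inr (Sum.inr (Sum.inl (i, (0 : Fin 2)))) ∧
       b = Sum.inr (Sum.inr (Sum.inl (i, (1 : Fin 2))))) ∨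
    (∃ (i : Fin n) (j : Fin (rv i)), a = Sum.inr (Sum.inr (Sum.inr (Sum.inl i))) ∧
       b = Sum.inr (Sum.inr (Sum.inr (Sum.inr ⟨i, j⟩)))))

lemma isVDEC_map {V W : Type*} {G : SimpleGraph V} {H : SimpleGraph W} (e : G ≃g H)
    {k : ℕ} {c : Sym2 W → Fin k} (hc : IsVDEC H k c) :
    IsVDEC G k (fun s => c (s.map e)) := by
  obtain ⟨h1, h2⟩ := hc
  constructor
  · intro u v w huv huw hvw
    simp only [Sym2.map_pair_eq]
    exact h1 (e.map_adj_iff.2 huv) (e.map_adj_iff.2 huw)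
      (fun hh => hvw (e.injective hh))
  · intro u v huv hset
    refine h2 (e u) (e v) (fun hh => huv (e.injective hh)) ?_
    have key : ∀ x : V, {i : Fin k | ∃ w, G.Adj x w ∧ c (Sym2.map e s(x, w)) = i} =
        {i : Fin k | ∃ w, H.Adj (e x) w ∧ c s(e x, w) = i} := by
      intro x
      ext i
      simp only [Set.mem_setOf_eq, Sym2.map_pair_eq]
      constructor
      · rintro ⟨w, hw, rfl⟩
        exact ⟨e w, e.map_adj_iff.2 hw, rfl⟩
      · rintro ⟨w, hw, rfl⟩
        refine ⟨e.symm w, ?_, by simp⟩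
        have := e.symm.map_adj_iff.2 hw
        simpa using this
    rw [← key u, ← key v, hset]

lemma vdecNum_congr {V W : Type*} {G : SimpleGraph V} {H : SimpleGraph W} (e : G ≃g H) :
    vdecNum G = vdecNum H := by
  unfold vdecNum
  congr 1
  ext k
  constructor
  · rintro ⟨c, hc⟩
    exact ⟨fun s => c (s.map e.symm), isVDEC_map e.symm hc⟩
  · rintro ⟨c, hc⟩
    exact ⟨fun s => c (s.map e), isVDEC_map e hc⟩

lemma numDeg_congr {V W : Type*} {G : SimpleGraph V} {H : SimpleGraph W} (e : G ≃g H)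
    (d : ℕ) : numDeg G d = numDeg H d := by
  unfold numDeg
  refine Nat.card_eq_of_bijective (fun v => ⟨e v.1, ?_⟩) ?_
  · have := Nat.card_eq_of_bijective _ (e.mapNeighborSet v.1).bijective
    rw [← this]; exact v.2
  · constructor
    · intro a b hab
      exact Subtype.ext (e.injective (congrArg Subtype.val hab))
    · rintro ⟨w, hw⟩
      refine ⟨⟨e.symm w, ?_⟩, by simp⟩
      have := Nat.card_eq_of_bijective _ (e.symm.mapNeighborSet w).bijective
      omega


namespace Case1
variable {r : ℕ}

abbrev V1 (r : ℕ) := QVert r 2 0 Fin.elim0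
abbrev G1 (r : ℕ) := QGraph r 2 0 Fin.elim0

def w0 : V1 r := Sum.inl ()
def wl (i : Fin r) : V1 r := Sum.inr (Sum.inl i)
def sv (i j : Fin 2) : V1 r := Sum.inr (Sum.inr (Sum.inl (i, j)))

lemma adj_iff {a b : V1 r} : (G1 r).Adj a b ↔
    (∃ i, a = w0 ∧ b = wl i) ∨ (∃ i, a = wl i ∧ b = w0) ∨
    (∃ i, a = w0 ∧ b = sv i 0) ∨ (∃ i, a = sv i 0 ∧ b = w0) ∨
    (∃ i, a = sv i 0 ∧ b = sv i 1) ∨ (∃ i, a = sv i 1 ∧ b = sv i 0) := by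
  show (SimpleGraph.fromRel _).Adj a b ↔ _
  rw [fromRel_adj]
  simp only [w0, wl, sv]
  constructor
  · rintro ⟨hne, h | h⟩
    · rcases h with ⟨rfl, (⟨i, rfl⟩|⟨i,rfl⟩|⟨i,rfl⟩)⟩ | ⟨i, rfl, rfl⟩ | ⟨i, j, rfl, rfl⟩
      · exact Or.inl ⟨i, rfl, rfl⟩
      · exact Or.inr (Or.inr (Or.inl ⟨i, rfl, rfl⟩))
      · exact i.elim0
      · exact Or.inr (Or.inr (Or.inr (Or.inr (Or.inl ⟨i, rfl, rfl⟩))))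
      · exact i.elim0
    · rcases h with ⟨rfl, (⟨i, rfl⟩|⟨i,rfl⟩|⟨i,rfl⟩)⟩ | ⟨i, rfl, rfl⟩ | ⟨i, j, rfl, rfl⟩
      · exact Or.inr (Or.inl ⟨i, rfl, rfl⟩)
      · exact Or.inr (Or.inr (Or.inr (Or.inl ⟨i, rfl, rfl⟩)))
      · exact i.elim0
      · exact Or.inr (Or.inr (Or.inr (Or.inr (Or.inr ⟨i, rfl, rfl⟩))))
      · exact i.elim0
  · rintro (⟨i, rfl, rfl⟩|⟨i, rfl, rfl⟩|⟨i, rfl, rfl⟩|⟨i, rfl, rfl⟩|⟨i, rfl, rfl⟩|⟨i, rfl, rfl⟩) <;>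
      refine ⟨by simp, ?_⟩
    · exact Or.inl (Or.inl ⟨rfl, Or.inl ⟨i, rfl⟩⟩)
    · exact Or.inr (Or.inl ⟨rfl, Or.inl ⟨i, rfl⟩⟩)
    · exact Or.inl (Or.inl ⟨rfl, Or.inr (Or.inl ⟨i, rfl⟩)⟩)
    · exact Or.inr (Or.inl ⟨rfl, Or.inr (Or.inl ⟨i, rfl⟩)⟩)
    · exact Or.inl (Or.inr (Or.inl ⟨i, rfl, rfl⟩))
    · exact Or.inr (Or.inr (Or.inl ⟨i, rfl, rfl⟩))

end Case1
namespace Case1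
variable {r : ℕ}

lemma wl_inj : Function.Injective (wl : Fin r → V1 r) := by
  intro a b h; simpa [wl] using h

lemma deg_w0 : Nat.card ((G1 r).neighborSet w0) = r + 2 := by
  have hs : (G1 r).neighborSet w0 = Set.range (Sum.elim wl (fun i => sv i 0) : Fin r ⊕ Fin 2 → V1 r) := by
    ext b
    simp only [mem_neighborSet, adj_iff, Set.mem_range]
    constructor
    · rintro (⟨i, h, rfl⟩|⟨i, h, h2⟩|⟨i, h, rfl⟩|⟨i, h, h2⟩|⟨i, h, h2⟩|⟨i, h, h2⟩)
      · exact ⟨Sum.inl i, rfl⟩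
      · exact absurd h (by simp [w0, wl])
      · exact ⟨Sum.inr i, rfl⟩
      · exact absurd h (by simp [w0, sv])
      · exact absurd h (by simp [w0, sv])
      · exact absurd h (by simp [w0, sv])
    · rintro ⟨(i|i), rfl⟩
      · exact Or.inl ⟨i, by simp⟩
      · exact Or.inr (Or.inr (Or.inl ⟨i, by simp⟩))
  rw [hs, Nat.card_range_of_injective]
  · simp
  · rintro (a|a) (b|b) h <;> simp [wl, sv] at h <;> simp [h]

lemma deg_wl (i : Fin r) : Nat.card ((G1 r).neighborSet (wl i)) = 1 := by
  have hs : (G1 r).neighborSet (wl i) = {w0} := by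
    ext b
    simp only [mem_neighborSet, adj_iff, Set.mem_singleton_iff]
    constructor
    · rintro (⟨j, h, h2⟩|⟨j, h, rfl⟩|⟨j, h, h2⟩|⟨j, h, h2⟩|⟨j, h, h2⟩|⟨j, h, h2⟩) <;>
        first | rfl | (exact absurd h (by simp [w0, wl, sv]))
    · rintro rfl
      exact Or.inr (Or.inl ⟨i, rfl, rfl⟩)
  rw [hs]; simp

lemma deg_sv0 (i : Fin 2) : Nat.card ((G1 r).neighborSet (sv i 0)) = 2 := by
  have hs : (G1 r).neighborSet (sv i 0) = {w0, sv i 1} := by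
    ext b
    simp only [mem_neighborSet, adj_iff, Set.mem_insert_iff, Set.mem_singleton_iff]
    constructor
    · rintro (⟨j, h, h2⟩|⟨j, h, rfl⟩|⟨j, h, h2⟩|⟨j, h, rfl⟩|⟨j, h, rfl⟩|⟨j, h, h2⟩)
      · exact absurd h (by simp [w0, sv])
      · exact absurd h (by simp [wl, sv])
      · exact absurd h (by simp [w0, sv])
      · exact Or.inl rfl
      · simp [sv] at h; exact Or.inr (by simp [sv, h])
      · exact absurd h (by simp [sv])
    · rintro (rfl | rfl)
      · exact Or.inr (Or.inr (Or.inr (Or.inl ⟨i, rfl, rfl⟩)))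
      · exact Or.inr (Or.inr (Or.inr (Or.inr (Or.inl ⟨i, rfl, rfl⟩))))
  rw [hs, Nat.card_coe_set_eq, Set.ncard_pair (by simp [w0, sv])]

lemma deg_sv1 (i : Fin 2) : Nat.card ((G1 r).neighborSet (sv i 1)) = 1 := by
  have hs : (G1 r).neighborSet (sv i 1) = {sv i 0} := by
    ext b
    simp only [mem_neighborSet, adj_iff, Set.mem_singleton_iff]
    constructor
    · rintro (⟨j, h, h2⟩|⟨j, h, h2⟩|⟨j, h, h2⟩|⟨j, h, h2⟩|⟨j, h, h2⟩|⟨j, h, rfl⟩)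
      · exact absurd h (by simp [w0, sv])
      · exact absurd h (by simp [wl, sv])
      · exact absurd h (by simp [w0, sv])
      · exact absurd h (by simp [sv])
      · exact absurd h (by simp [sv])
      · simp [sv] at h; simp [sv, h]
    · rintro rfl
      exact Or.inr (Or.inr (Or.inr (Or.inr (Or.inr ⟨i, rfl, rfl⟩))))
  rw [hs]; simp

end Case1
namespace Case1
variable {r : ℕ}

lemma numDeg1 : numDeg (G1 r) 1 = r + 2 := by
  unfold numDeg
  have := Nat.card_eq_of_bijective
    (f := fun x : Fin r ⊕ Fin 2 => (⟨Sum.elim wl (fun i => sv i 1) x, by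
      rcases x with i | i
      · exact deg_wl i
      · exact deg_sv1 i⟩ : {v : V1 r // Nat.card ((G1 r).neighborSet v) = 1}))
    (by
      constructor
      · rintro (a|a) (b|b) h <;> simp [wl, sv, Subtype.ext_iff] at h <;> simp [h]
      · rintro ⟨v, hv⟩
        rcases v with _ | v | ⟨i, j⟩ | v
        · rw [show (Sum.inl () : V1 r) = w0 from rfl, deg_w0] at hv; omega
        · exact ⟨Sum.inl v, rfl⟩
        · rw [show (Sum.inr (Sum.inr (Sum.inl (i, j))) : V1 r) = sv i j from rfl] at hv
          have hj : j = 0 ∨ j = 1 := by fin_cases j <;> simp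
          rcases hj with rfl | rfl
          · rw [deg_sv0] at hv; omega
          · exact ⟨Sum.inr i, rfl⟩
        · rcases v with v | ⟨v, _⟩ <;> exact v.elim0)
  rw [← this]
  simp

end Case1
def cs {V : Type*} (G : SimpleGraph V) {k : ℕ} (c : Sym2 V → Fin k) (u : V) : Set (Fin k) :=
  {i : Fin k | ∃ w, G.Adj u w ∧ c s(u, w) = i}

namespace Case1
variable {r k : ℕ} {c : Sym2 (V1 r) → Fin k}

lemma cs_w0 : cs (G1 r) c w0 =
    {i | (∃ j : Fin r, c s(w0, wl j) = i) ∨ (∃ j : Fin 2, c s(w0, sv j 0) = i)} := by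
  ext x
  simp only [cs, Set.mem_setOf_eq]
  constructor
  · rintro ⟨w, hw, rfl⟩
    rw [adj_iff] at hw
    rcases hw with ⟨i, h, rfl⟩|⟨i, h, h2⟩|⟨i, h, rfl⟩|⟨i, h, h2⟩|⟨i, h, h2⟩|⟨i, h, h2⟩
    · exact Or.inl ⟨i, rfl⟩
    · exact absurd h (by simp [w0, wl])
    · exact Or.inr ⟨i, rfl⟩
    · exact absurd h (by simp [w0, sv])
    · exact absurd h (by simp [w0, sv])
    · exact absurd h (by simp [w0, sv])
  · rintro (⟨j, rfl⟩ | ⟨j, rfl⟩)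
    · exact ⟨wl j, adj_iff.2 (Or.inl ⟨j, rfl, rfl⟩), rfl⟩
    · exact ⟨sv j 0, adj_iff.2 (Or.inr (Or.inr (Or.inl ⟨j, rfl, rfl⟩))), rfl⟩

lemma cs_wl (i : Fin r) : cs (G1 r) c (wl i) = {c s(wl i, w0)} := by
  ext x
  simp only [cs, Set.mem_setOf_eq, Set.mem_singleton_iff]
  constructor
  · rintro ⟨w, hw, rfl⟩
    rw [adj_iff] at hw
    rcases hw with ⟨j, h, h2⟩|⟨j, h, rfl⟩|⟨j, h, h2⟩|⟨j, h, h2⟩|⟨j, h, h2⟩|⟨j, h, h2⟩ <;>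
      first | rfl | (exact absurd h (by simp [w0, wl, sv]))
  · rintro rfl
    exact ⟨w0, adj_iff.2 (Or.inr (Or.inl ⟨i, rfl, rfl⟩)), rfl⟩

lemma cs_sv0 (i : Fin 2) : cs (G1 r) c (sv i 0) = {c s(sv i 0, w0), c s(sv i 0, sv i 1)} := by
  ext x
  simp only [cs, Set.mem_setOf_eq, Set.mem_insert_iff, Set.mem_singleton_iff]
  constructor
  · rintro ⟨w, hw, rfl⟩
    rw [adj_iff] at hw
    rcases hw with ⟨j, h, h2⟩|⟨j, h, rfl⟩|⟨j, h, h2⟩|⟨j, h, rfl⟩|⟨j, h, rfl⟩|⟨j, h, h2⟩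
    · exact absurd h (by simp [w0, sv])
    · exact absurd h (by simp [wl, sv])
    · exact absurd h (by simp [w0, sv])
    · exact Or.inl rfl
    · simp only [sv, Sum.inr.injEq, Sum.inl.injEq, Prod.mk.injEq] at h
      exact Or.inr (by rw [h.1])
    · exact absurd h (by simp [sv])
  · rintro (rfl | rfl)
    · exact ⟨w0, adj_iff.2 (Or.inr (Or.inr (Or.inr (Or.inl ⟨i, rfl, rfl⟩)))), rfl⟩
    · exact ⟨sv i 1, adj_iff.2 (Or.inr (Or.inr (Or.inr (Or.inr (Or.inl ⟨i, rfl, rfl⟩))))), rfl⟩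

lemma cs_sv1 (i : Fin 2) : cs (G1 r) c (sv i 1) = {c s(sv i 1, sv i 0)} := by
  ext x
  simp only [cs, Set.mem_setOf_eq, Set.mem_singleton_iff]
  constructor
  · rintro ⟨w, hw, rfl⟩
    rw [adj_iff] at hw
    rcases hw with ⟨j, h, h2⟩|⟨j, h, h2⟩|⟨j, h, h2⟩|⟨j, h, h2⟩|⟨j, h, h2⟩|⟨j, h, rfl⟩
    · exact absurd h (by simp [w0, sv])
    · exact absurd h (by simp [wl, sv])
    · exact absurd h (by simp [w0, sv])
    · exact absurd h (by simp [sv])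
    · exact absurd h (by simp [sv])
    · simp only [sv, Sum.inr.injEq, Sum.inl.injEq, Prod.mk.injEq] at h
      rw [h.1]
  · rintro rfl
    exact ⟨sv i 0, adj_iff.2 (Or.inr (Or.inr (Or.inr (Or.inr (Or.inr ⟨i, rfl, rfl⟩))))), rfl⟩

end Case1
lemma fin2cases (j : Fin 2) : j = 0 ∨ j = 1 := by fin_cases j <;> simp

namespace Case1
variable {r k : ℕ}

lemma adj_w0_wl (i : Fin r) : (G1 r).Adj w0 (wl i) := adj_iff.2 (Or.inl ⟨i, rfl, rfl⟩)
lemma adj_w0_sv0 (i : Fin 2) : (G1 r).Adj w0 (sv i 0) :=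
  adj_iff.2 (Or.inr (Or.inr (Or.inl ⟨i, rfl, rfl⟩)))
lemma adj_sv0_w0 (i : Fin 2) : (G1 r).Adj (sv i 0) w0 :=
  adj_iff.2 (Or.inr (Or.inr (Or.inr (Or.inl ⟨i, rfl, rfl⟩))))
lemma adj_sv0_sv1 (i : Fin 2) : (G1 r).Adj (sv i 0) (sv i 1) :=
  adj_iff.2 (Or.inr (Or.inr (Or.inr (Or.inr (Or.inl ⟨i, rfl, rfl⟩)))))

lemma lower1 {c : Sym2 (V1 r) → Fin k} (hc : IsVDEC (G1 r) k c) : r + 3 ≤ k := by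
  obtain ⟨hp, hd'⟩ := hc
  have hd : ∀ u v : V1 r, u ≠ v → cs (G1 r) c u ≠ cs (G1 r) c v := hd'
  set F : Fin r ⊕ Fin 2 → Fin k :=
    Sum.elim (fun i => c s(wl i, w0)) (fun i => c s(sv i 1, sv i 0)) with hF
  have hL : ∀ x : Fin r ⊕ Fin 2, cs (G1 r) c (Sum.elim wl (fun i => sv i 1) x) = {F x} := by
    rintro (i | i)
    · exact cs_wl i
    · exact cs_sv1 i
  have hLinj : Function.Injective (Sum.elim wl (fun i => sv i 1) : Fin r ⊕ Fin 2 → V1 r) := by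
    rintro (a|a) (b|b) h <;> simp [wl, sv] at h <;> simp [h]
  have Finj : Function.Injective F := by
    intro x y hxy
    by_contra hne
    exact hd _ _ (fun hh => hne (hLinj hh)) (by rw [hL x, hL y, hxy])
  have hcard : r + 2 ≤ k := by
    have := Fintype.card_le_of_injective F Finj
    simpa using this
  by_contra hlt
  have hk : k = r + 2 := by omega
  have Fsurj : Function.Surjective F := by
    have : Function.Bijective F := (Fintype.bijective_iff_injective_and_card F).2
      ⟨Finj, by simp [hk]⟩
    exact this.2
  -- analyze p = color of edge w0 - sv 0 0
  have key : ∀ i : Fin 2, c s(w0, sv i 0) = c s(sv (1 - i) 0, sv (1 - i) 1) := by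
    intro i
    obtain ⟨x, hx⟩ := Fsurj (c s(w0, sv i 0))
    rcases x with j | j
    · exfalso
      refine hp (adj_w0_sv0 i) (adj_w0_wl j) (by simp [wl, sv]) ?_
      rw [← hx]; simp only [hF, Sum.elim_inl]
      rw [Sym2.eq_swap]
    · have hx' : c s(w0, sv i 0) = c s(sv j 0, sv j 1) := by
        rw [← hx]; simp only [hF, Sum.elim_inr]; rw [Sym2.eq_swap]
      have hji : j ≠ i := by
        rintro rfl
        refine hp (adj_sv0_w0 j) (adj_sv0_sv1 j) (by simp [w0, sv]) ?_
        rw [show s(sv j 0, w0) = s(w0, (sv j 0 : V1 r)) from Sym2.eq_swap]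
        exact hx'
      have : j = 1 - i := by
        rcases fin2cases i with rfl | rfl <;> rcases fin2cases j with rfl | rfl <;>
          first | exact absurd rfl hji | decide
      rw [this] at hx'
      exact hx'
  have h0 : c s(w0, sv 0 0) = c s(sv 1 0, sv 1 1) := by simpa using key 0
  have h1 : c s(w0, sv 1 0) = c s(sv 0 0, sv 0 1) := by simpa using key 1
  refine hd (sv 0 0) (sv 1 0) (by simp [sv]) ?_
  rw [cs_sv0, cs_sv0]
  rw [show s(sv (0:Fin 2) 0, w0) = s(w0, (sv (0:Fin 2) 0 : V1 r)) from Sym2.eq_swap,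
    show s(sv (1:Fin 2) 0, w0) = s(w0, (sv (1:Fin 2) 0 : V1 r)) from Sym2.eq_swap,
    h0, h1]
  exact Set.pair_comm _ _

end Case1
namespace Case1
variable {r : ℕ}

def h1 (r : ℕ) (i : Fin 2) : Fin (r + 3) :=
  if i = 0 then ⟨r, by omega⟩ else ⟨r + 1, by omega⟩

def h2 (r : ℕ) (i : Fin 2) : Fin (r + 3) :=
  if i = 0 then ⟨r + 2, by omega⟩ else ⟨r, by omega⟩

def col (r : ℕ) : V1 r → V1 r → Fin (r + 3)
  | Sum.inl _, Sum.inr (Sum.inl i) => Fin.castAdd 3 i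
  | Sum.inr (Sum.inl i), Sum.inl _ => Fin.castAdd 3 i
  | Sum.inl _, Sum.inr (Sum.inr (Sum.inl (i, _))) => h1 r i
  | Sum.inr (Sum.inr (Sum.inl (i, _))), Sum.inl _ => h1 r i
  | Sum.inr (Sum.inr (Sum.inl (i, j))), Sum.inr (Sum.inr (Sum.inl (i', j'))) =>
      if j = 0 ∧ j' = 1 then h2 r i
      else if j = 1 ∧ j' = 0 then h2 r i'
      else 0
  | _, _ => 0

lemma col_symm (a b : V1 r) : col r a b = col r b a := by
  rcases a with _ | a | ⟨i, j⟩ | (a | ⟨a, _⟩) <;>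
    rcases b with _ | b | ⟨i', j'⟩ | (b | ⟨b, _⟩) <;>
    first
      | rfl
      | exact a.elim0
      | exact b.elim0
      | (show (if j = 0 ∧ j' = 1 then h2 r i else if j = 1 ∧ j' = 0 then h2 r i' else 0) =
            (if j' = 0 ∧ j = 1 then h2 r i' else if j' = 1 ∧ j = 0 then h2 r i else 0)
         rcases fin2cases j with rfl | rfl <;> rcases fin2cases j' with rfl | rfl <;> simp)

noncomputable def c1 (r : ℕ) : Sym2 (V1 r) → Fin (r + 3) := Sym2.lift ⟨col r, col_symm⟩

lemma c1_mk (a b : V1 r) : c1 r s(a, b) = col r a b := Sym2.lift_mk _ _ _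

lemma col_w0_wl (i : Fin r) : col r w0 (wl i) = Fin.castAdd 3 i := rfl
lemma col_wl_w0 (i : Fin r) : col r (wl i) w0 = Fin.castAdd 3 i := rfl
lemma col_w0_sv (i j : Fin 2) : col r w0 (sv i j) = h1 r i := rfl
lemma col_sv_w0 (i j : Fin 2) : col r (sv i j) w0 = h1 r i := rfl
lemma col_sv0_sv1 (i i' : Fin 2) : col r (sv i 0) (sv i' 1) = h2 r i := by
  show (if (0:Fin 2) = 0 ∧ (1:Fin 2) = 1 then h2 r i
      else if (0:Fin 2) = 1 ∧ (1:Fin 2) = 0 then h2 r i' else 0) = h2 r i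
  simp
lemma col_sv1_sv0 (i i' : Fin 2) : col r (sv i 1) (sv i' 0) = h2 r i' := by
  show (if (1:Fin 2) = 0 ∧ (0:Fin 2) = 1 then h2 r i
      else if (1:Fin 2) = 1 ∧ (0:Fin 2) = 0 then h2 r i' else 0) = h2 r i'
  simp

end Case1
namespace Case1
variable {r : ℕ}

lemma prop1 : ∀ ⦃u v w : V1 r⦄, (G1 r).Adj u v → (G1 r).Adj u w → v ≠ w →
    c1 r s(u, v) ≠ c1 r s(u, w) := by
  intro u v w huv huw hvw
  rw [adj_iff] at huv huw
  rw [c1_mk, c1_mk]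
  rcases huv with ⟨i, rfl, rfl⟩|⟨i, rfl, rfl⟩|⟨i, rfl, rfl⟩|⟨i, rfl, rfl⟩|⟨i, rfl, rfl⟩|⟨i, rfl, rfl⟩
  · rcases huw with ⟨i', h, rfl⟩|⟨i', h, rfl⟩|⟨i', h, rfl⟩|⟨i', h, rfl⟩|⟨i', h, rfl⟩|⟨i', h, rfl⟩ <;>
      try (apply absurd h; simp [w0, wl, sv]; done)
    · have hiv : i.val ≠ i'.val := Fin.val_ne_iff.mpr (fun hh => hvw (by rw [hh]))
      simpa [col_w0_wl, Fin.ext_iff] using hiv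
    · have := i.isLt
      simp only [col_w0_wl, col_w0_sv, h1]
      split <;> (apply Fin.ne_of_val_ne; simp; omega)
  · rcases huw with ⟨i', h, rfl⟩|⟨i', h, rfl⟩|⟨i', h, rfl⟩|⟨i', h, rfl⟩|⟨i', h, rfl⟩|⟨i', h, rfl⟩ <;>
      try (apply absurd h; simp [w0, wl, sv]; done)
    · exact absurd rfl hvw
  · rcases huw with ⟨i', h, rfl⟩|⟨i', h, rfl⟩|⟨i', h, rfl⟩|⟨i', h, rfl⟩|⟨i', h, rfl⟩|⟨i', h, rfl⟩ <;>
      try (apply absurd h; simp [w0, wl, sv]; done)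
    · have := i'.isLt
      simp only [col_w0_wl, col_w0_sv, h1]
      split <;> (apply Fin.ne_of_val_ne; simp; omega)
    · have hiv : i ≠ i' := fun hh => hvw (by rw [hh])
      rcases fin2cases i with rfl | rfl <;> rcases fin2cases i' with rfl | rfl <;>
        first
          | exact absurd rfl hiv
          | simp [col_w0_sv, h1, Fin.ext_iff]
  · rcases huw with ⟨i', h, rfl⟩|⟨i', h, rfl⟩|⟨i', h, rfl⟩|⟨i', h, rfl⟩|⟨i', h, rfl⟩|⟨i', h, rfl⟩ <;>
      try (apply absurd h; simp [w0, wl, sv]; done)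
    · exact absurd rfl hvw
    · simp only [sv, Sum.inr.injEq, Sum.inl.injEq, Prod.mk.injEq] at h
      obtain ⟨rfl, -⟩ := h
      rcases fin2cases i with rfl | rfl <;>
        simp [col_sv_w0, col_sv0_sv1, h1, h2, Fin.ext_iff]
  · rcases huw with ⟨i', h, rfl⟩|⟨i', h, rfl⟩|⟨i', h, rfl⟩|⟨i', h, rfl⟩|⟨i', h, rfl⟩|⟨i', h, rfl⟩ <;>
      try (apply absurd h; simp [w0, wl, sv]; done)
    · simp only [sv, Sum.inr.injEq, Sum.inl.injEq, Prod.mk.injEq] at h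
      obtain ⟨rfl, -⟩ := h
      rcases fin2cases i with rfl | rfl <;>
        simp [col_sv_w0, col_sv0_sv1, h1, h2, Fin.ext_iff]
    · simp only [sv, Sum.inr.injEq, Sum.inl.injEq, Prod.mk.injEq] at h
      obtain ⟨rfl, -⟩ := h
      exact absurd rfl hvw
  · rcases huw with ⟨i', h, rfl⟩|⟨i', h, rfl⟩|⟨i', h, rfl⟩|⟨i', h, rfl⟩|⟨i', h, rfl⟩|⟨i', h, rfl⟩ <;>
      try (apply absurd h; simp [w0, wl, sv]; done)
    · simp only [sv, Sum.inr.injEq, Sum.inl.injEq, Prod.mk.injEq] at h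
      obtain ⟨rfl, -⟩ := h
      exact absurd rfl hvw

end Case1
namespace Case1
variable {r : ℕ}

lemma csA : cs (G1 r) (c1 r) w0 = {x : Fin (r + 3) | x.val ≤ r + 1} := by
  rw [cs_w0]
  ext x
  simp only [Set.mem_setOf_eq, c1_mk, col_w0_wl, col_w0_sv]
  constructor
  · rintro (⟨j, rfl⟩ | ⟨j, rfl⟩)
    · have := j.isLt; simp; omega
    · simp only [h1]; split <;> simp
  · intro hx
    rcases Nat.lt_or_ge x.val r with hlt | hge
    · exact Or.inl ⟨⟨x.val, hlt⟩, by apply Fin.ext; simp⟩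
    · rcases Nat.eq_or_lt_of_le hge with heq | hlt
      · exact Or.inr ⟨0, by simp [h1]; apply Fin.ext; simp [heq]⟩
      · refine Or.inr ⟨1, by simp [h1]; apply Fin.ext; simp; omega⟩

lemma csB (i : Fin r) : cs (G1 r) (c1 r) (wl i) = {Fin.castAdd 3 i} := by
  rw [cs_wl, c1_mk, col_wl_w0]

lemma csC (i : Fin 2) : cs (G1 r) (c1 r) (sv i 0) = {h1 r i, h2 r i} := by
  rw [cs_sv0, c1_mk, c1_mk, col_sv_w0, col_sv0_sv1]

lemma csD (i : Fin 2) : cs (G1 r) (c1 r) (sv i 1) = {h2 r i} := by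
  rw [cs_sv1, c1_mk, col_sv1_sv0]

lemma shape (x : V1 r) : x = w0 ∨ (∃ i, x = wl i) ∨ (∃ i, x = sv i 0) ∨ (∃ i, x = sv i 1) := by
  rcases x with _ | i | ⟨i, j⟩ | (x | ⟨x, _⟩)
  · exact Or.inl rfl
  · exact Or.inr (Or.inl ⟨i, rfl⟩)
  · rcases fin2cases j with rfl | rfl
    · exact Or.inr (Or.inr (Or.inl ⟨i, rfl⟩))
    · exact Or.inr (Or.inr (Or.inr ⟨i, rfl⟩))
  · exact x.elim0
  · exact x.elim0

lemma dist1 (hr : 1 ≤ r) : ∀ u v : V1 r, u ≠ v →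
    cs (G1 r) (c1 r) u ≠ cs (G1 r) (c1 r) v := by
  intro u v hne heq
  rcases shape u with rfl | ⟨i, rfl⟩ | ⟨i, rfl⟩ | ⟨i, rfl⟩ <;>
    rcases shape v with rfl | ⟨i', rfl⟩ | ⟨i', rfl⟩ | ⟨i', rfl⟩
  -- w0, w0
  · exact hne rfl
  -- w0, wl
  · have hx := Set.ext_iff.mp heq ⟨r, by omega⟩
    have := i'.isLt
    rw [csA, csB] at hx
    simp [Fin.ext_iff] at hx
    omega
  -- w0, sv0
  · have hx := Set.ext_iff.mp heq ⟨0, by omega⟩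
    rw [csA, csC] at hx
    rcases fin2cases i' with rfl | rfl <;> simp [h1, h2, Fin.ext_iff] at hx <;> omega
  -- w0, sv1
  · rw [csA, csD] at heq
    have hx := Set.ext_iff.mp heq ⟨r, by omega⟩
    have hy := Set.ext_iff.mp heq ⟨r + 1, by omega⟩
    rcases fin2cases i' with rfl | rfl <;>
      simp [h2, Fin.ext_iff] at hx hy <;> omega
  -- wl, w0
  · have hx := Set.ext_iff.mp heq ⟨r, by omega⟩
    have := i.isLt
    rw [csA, csB] at hx
    simp [Fin.ext_iff] at hx
    omega
  -- wl, wl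
  · have hiv : i.val ≠ i'.val := fun hh => hne (by rw [show i = i' from Fin.ext hh])
    have hx := Set.ext_iff.mp heq (Fin.castAdd 3 i)
    rw [csB, csB] at hx
    simp [Fin.ext_iff] at hx
    omega
  -- wl, sv0
  · have := i.isLt
    have hx := Set.ext_iff.mp heq (h2 r i')
    rw [csB, csC] at hx
    rcases fin2cases i' with rfl | rfl <;> simp [h1, h2, Fin.ext_iff] at hx <;> omega
  -- wl, sv1
  · have := i.isLt
    have hx := Set.ext_iff.mp heq (h2 r i')
    rw [csB, csD] at hx
    rcases fin2cases i' with rfl | rfl <;> simp [h2, Fin.ext_iff] at hx <;> omega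
  -- sv0, w0
  · have hx := Set.ext_iff.mp heq ⟨0, by omega⟩
    rw [csA, csC] at hx
    rcases fin2cases i with rfl | rfl <;> simp [h1, h2, Fin.ext_iff] at hx <;> omega
  -- sv0, wl
  · have := i'.isLt
    have hx := Set.ext_iff.mp heq (h2 r i)
    rw [csB, csC] at hx
    rcases fin2cases i with rfl | rfl <;> simp [h1, h2, Fin.ext_iff] at hx <;> omega
  -- sv0, sv0
  · rw [csC, csC] at heq
    rcases fin2cases i with rfl | rfl <;> rcases fin2cases i' with rfl | rfl <;>
      first
        | exact hne rfl
        | (have hx := Set.ext_iff.mp heq ⟨r + 2, by omega⟩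
           simp [h1, h2, Fin.ext_iff] at hx <;> omega)
  -- sv0, sv1
  · rw [csC, csD] at heq
    rcases fin2cases i with rfl | rfl <;> rcases fin2cases i' with rfl | rfl
    · have hx := Set.ext_iff.mp heq ⟨r, by omega⟩
      simp [h1, h2, Fin.ext_iff] at hx <;> omega
    · have hx := Set.ext_iff.mp heq ⟨r + 2, by omega⟩
      simp [h1, h2, Fin.ext_iff] at hx <;> omega
    · have hx := Set.ext_iff.mp heq ⟨r + 1, by omega⟩
      simp [h1, h2, Fin.ext_iff] at hx <;> omega
    · have hx := Set.ext_iff.mp heq ⟨r + 1, by omega⟩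
      simp [h1, h2, Fin.ext_iff] at hx <;> omega
  -- sv1, w0
  · rw [csD, csA] at heq
    have hx := Set.ext_iff.mp heq ⟨r, by omega⟩
    have hy := Set.ext_iff.mp heq ⟨r + 1, by omega⟩
    rcases fin2cases i with rfl | rfl <;>
      simp [h2, Fin.ext_iff] at hx hy <;> omega
  -- sv1, wl
  · have := i'.isLt
    have hx := Set.ext_iff.mp heq (h2 r i)
    rw [csB, csD] at hx
    rcases fin2cases i with rfl | rfl <;> simp [h2, Fin.ext_iff] at hx <;> omega
  -- sv1, sv0
  · rw [csD, csC] at heq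
    rcases fin2cases i with rfl | rfl <;> rcases fin2cases i' with rfl | rfl
    · have hx := Set.ext_iff.mp heq ⟨r, by omega⟩
      simp [h1, h2, Fin.ext_iff] at hx <;> omega
    · have hx := Set.ext_iff.mp heq ⟨r + 1, by omega⟩
      simp [h1, h2, Fin.ext_iff] at hx <;> omega
    · have hx := Set.ext_iff.mp heq ⟨r + 2, by omega⟩
      simp [h1, h2, Fin.ext_iff] at hx <;> omega
    · have hx := Set.ext_iff.mp heq ⟨r + 1, by omega⟩
      simp [h1, h2, Fin.ext_iff] at hx <;> omega
  -- sv1, sv1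
  · rw [csD, csD] at heq
    rcases fin2cases i with rfl | rfl <;> rcases fin2cases i' with rfl | rfl <;>
      first
        | exact hne rfl
        | (have hx := Set.ext_iff.mp heq ⟨r + 2, by omega⟩
           simp [h2, Fin.ext_iff] at hx <;> omega)

end Case1
namespace Case2
variable {rv : Fin 1 → ℕ}

abbrev V2 (rv : Fin 1 → ℕ) := QVert 0 1 1 rv
abbrev G2 (rv : Fin 1 → ℕ) := QGraph 0 1 1 rv

def w0 : V2 rv := Sum.inl ()
def sv (j : Fin 2) : V2 rv := Sum.inr (Sum.inr (Sum.inl (0, j)))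
def t : V2 rv := Sum.inr (Sum.inr (Sum.inr (Sum.inl 0)))
def tl (j : Fin (rv 0)) : V2 rv := Sum.inr (Sum.inr (Sum.inr (Sum.inr ⟨0, j⟩)))

lemma fin1 (i : Fin 1) : i = 0 := Subsingleton.elim _ _

lemma adj_iff {a b : V2 rv} : (G2 rv).Adj a b ↔
    (a = w0 ∧ b = sv 0) ∨ (a = sv 0 ∧ b = w0) ∨
    (a = w0 ∧ b = t) ∨ (a = t ∧ b = w0) ∨
    (a = sv 0 ∧ b = sv 1) ∨ (a = sv 1 ∧ b = sv 0) ∨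
    (∃ j, a = t ∧ b = tl j) ∨ (∃ j, a = tl j ∧ b = t) := by
  show (SimpleGraph.fromRel _).Adj a b ↔ _
  rw [fromRel_adj]
  constructor
  · rintro ⟨hne, h | h⟩
    · rcases h with ⟨rfl, (⟨i, rfl⟩|⟨i,rfl⟩|⟨i,rfl⟩)⟩ | ⟨i, rfl, rfl⟩ | ⟨i, j, rfl, rfl⟩
      · exact i.elim0
      · rw [fin1 i]
        exact Or.inl ⟨rfl, rfl⟩
      · rw [fin1 i]
        exact Or.inr (Or.inr (Or.inl ⟨rfl, rfl⟩))
      · rw [fin1 i]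
        exact Or.inr (Or.inr (Or.inr (Or.inr (Or.inl ⟨rfl, rfl⟩))))
      · obtain rfl := fin1 i
        exact Or.inr (Or.inr (Or.inr (Or.inr (Or.inr (Or.inr (Or.inl ⟨j, rfl, rfl⟩))))))
    · rcases h with ⟨rfl, (⟨i, rfl⟩|⟨i,rfl⟩|⟨i,rfl⟩)⟩ | ⟨i, rfl, rfl⟩ | ⟨i, j, rfl, rfl⟩
      · exact i.elim0
      · rw [fin1 i]
        exact Or.inr (Or.inl ⟨rfl, rfl⟩)
      · rw [fin1 i]
        exact Or.inr (Or.inr (Or.inr (Or.inl ⟨rfl, rfl⟩)))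
      · rw [fin1 i]
        exact Or.inr (Or.inr (Or.inr (Or.inr (Or.inr (Or.inl ⟨rfl, rfl⟩)))))
      · obtain rfl := fin1 i
        exact Or.inr (Or.inr (Or.inr (Or.inr (Or.inr (Or.inr (Or.inr ⟨j, rfl, rfl⟩))))))
  · rintro (⟨rfl, rfl⟩|⟨rfl, rfl⟩|⟨rfl, rfl⟩|⟨rfl, rfl⟩|⟨rfl, rfl⟩|⟨rfl, rfl⟩|⟨j, rfl, rfl⟩|⟨j, rfl, rfl⟩) <;>
      refine ⟨by intro hh; simp [w0, sv, t, tl, Prod.ext_iff, Fin.ext_iff] at hh, ?_⟩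
    · exact Or.inl (Or.inl ⟨rfl, Or.inr (Or.inl ⟨0, rfl⟩)⟩)
    · exact Or.inr (Or.inl ⟨rfl, Or.inr (Or.inl ⟨0, rfl⟩)⟩)
    · exact Or.inl (Or.inl ⟨rfl, Or.inr (Or.inr ⟨0, rfl⟩)⟩)
    · exact Or.inr (Or.inl ⟨rfl, Or.inr (Or.inr ⟨0, rfl⟩)⟩)
    · exact Or.inl (Or.inr (Or.inl ⟨0, rfl, rfl⟩))
    · exact Or.inr (Or.inr (Or.inl ⟨0, rfl, rfl⟩))
    · exact Or.inl (Or.inr (Or.inr ⟨0, j, rfl, rfl⟩))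
    · exact Or.inr (Or.inr (Or.inr ⟨0, j, rfl, rfl⟩))

end Case2
namespace Case2
variable {rv : Fin 1 → ℕ}

lemma deg_w0 : Nat.card ((G2 rv).neighborSet w0) = 2 := by
  have hs : (G2 rv).neighborSet w0 = {sv 0, t} := by
    ext b
    simp only [mem_neighborSet, adj_iff, Set.mem_insert_iff, Set.mem_singleton_iff]
    constructor
    · rintro (⟨h, rfl⟩|⟨h, rfl⟩|⟨h, rfl⟩|⟨h, rfl⟩|⟨h, rfl⟩|⟨h, rfl⟩|⟨j, h, rfl⟩|⟨j, h, rfl⟩) <;>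
        first
          | exact Or.inl rfl
          | exact Or.inr rfl
          | exact absurd h (by intro hh; simp [w0, sv, t, tl, Prod.ext_iff, Fin.ext_iff] at hh)
    · rintro (rfl | rfl)
      · exact Or.inl (by simp)
      · exact Or.inr (Or.inr (Or.inl (by simp)))
  rw [hs, Nat.card_coe_set_eq, Set.ncard_pair (by simp [sv, t])]

lemma deg_sv0 : Nat.card ((G2 rv).neighborSet (sv 0)) = 2 := by
  have hs : (G2 rv).neighborSet (sv 0) = {w0, sv 1} := by
    ext b
    simp only [mem_neighborSet, adj_iff, Set.mem_insert_iff, Set.mem_singleton_iff]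
    constructor
    · rintro (⟨h, rfl⟩|⟨h, rfl⟩|⟨h, rfl⟩|⟨h, rfl⟩|⟨h, rfl⟩|⟨h, rfl⟩|⟨j, h, rfl⟩|⟨j, h, rfl⟩) <;>
        first
          | exact Or.inl rfl
          | exact Or.inr rfl
          | exact absurd h (by intro hh; simp [w0, sv, t, tl, Prod.ext_iff, Fin.ext_iff] at hh)
    · rintro (rfl | rfl)
      · exact Or.inr (Or.inl (by simp))
      · exact Or.inr (Or.inr (Or.inr (Or.inr (Or.inl (by simp)))))
  rw [hs, Nat.card_coe_set_eq, Set.ncard_pair (by simp [w0, sv])]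

lemma deg_sv1 : Nat.card ((G2 rv).neighborSet (sv 1)) = 1 := by
  have hs : (G2 rv).neighborSet (sv 1) = {sv 0} := by
    ext b
    simp only [mem_neighborSet, adj_iff, Set.mem_singleton_iff]
    constructor
    · rintro (⟨h, rfl⟩|⟨h, rfl⟩|⟨h, rfl⟩|⟨h, rfl⟩|⟨h, rfl⟩|⟨h, rfl⟩|⟨j, h, rfl⟩|⟨j, h, rfl⟩) <;>
        first
          | rfl
          | exact absurd h (by intro hh; simp [w0, sv, t, tl, Prod.ext_iff, Fin.ext_iff] at hh)
    · rintro rfl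
      exact Or.inr (Or.inr (Or.inr (Or.inr (Or.inr (Or.inl (by simp))))))
  rw [hs]; simp

lemma deg_tl (j : Fin (rv 0)) : Nat.card ((G2 rv).neighborSet (tl j)) = 1 := by
  have hs : (G2 rv).neighborSet (tl j) = {t} := by
    ext b
    simp only [mem_neighborSet, adj_iff, Set.mem_singleton_iff]
    constructor
    · rintro (⟨h, rfl⟩|⟨h, rfl⟩|⟨h, rfl⟩|⟨h, rfl⟩|⟨h, rfl⟩|⟨h, rfl⟩|⟨j', h, rfl⟩|⟨j', h, rfl⟩) <;>
        first
          | rfl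
          | exact absurd h (by intro hh; simp [w0, sv, t, tl, Prod.ext_iff, Fin.ext_iff] at hh)
    · rintro rfl
      exact Or.inr (Or.inr (Or.inr (Or.inr (Or.inr (Or.inr (Or.inr ⟨j, by simp⟩))))))
  rw [hs]; simp

lemma tl_inj : Function.Injective (tl : Fin (rv 0) → V2 rv) := by
  intro a b h
  simpa [tl] using h

lemma deg_t : Nat.card ((G2 rv).neighborSet t) = rv 0 + 1 := by
  have hs : (G2 rv).neighborSet t =
      Set.range (Sum.elim (fun _ : Unit => w0) tl : Unit ⊕ Fin (rv 0) → V2 rv) := by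
    ext b
    simp only [mem_neighborSet, adj_iff, Set.mem_range]
    constructor
    · rintro (⟨h, rfl⟩|⟨h, rfl⟩|⟨h, rfl⟩|⟨h, rfl⟩|⟨h, rfl⟩|⟨h, rfl⟩|⟨j, h, rfl⟩|⟨j, h, rfl⟩) <;>
        first
          | exact ⟨Sum.inl (), rfl⟩
          | exact ⟨Sum.inr j, rfl⟩
          | exact absurd h (by intro hh; simp [w0, sv, t, tl, Prod.ext_iff, Fin.ext_iff] at hh)
    · rintro ⟨(x | j), rfl⟩
      · exact Or.inr (Or.inr (Or.inr (Or.inl (by simp))))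
      · exact Or.inr (Or.inr (Or.inr (Or.inr (Or.inr (Or.inr (Or.inl ⟨j, by simp⟩))))))
  rw [hs, Nat.card_range_of_injective]
  · simp [Nat.add_comm]
  · rintro (a|a) (b|b) h <;> simp [w0, tl] at h <;> simp [h]

lemma numDeg2 (hrv : 2 ≤ rv 0) : numDeg (G2 rv) 1 = rv 0 + 1 := by
  unfold numDeg
  have := Nat.card_eq_of_bijective
    (f := fun x : Unit ⊕ Fin (rv 0) => (⟨Sum.elim (fun _ => sv 1) tl x, by
      rcases x with _ | j
      · exact deg_sv1
      · exact deg_tl j⟩ : {v : V2 rv // Nat.card ((G2 rv).neighborSet v) = 1}))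
    (by
      constructor
      · rintro (a|a) (b|b) h <;>
          simp [sv, tl, Subtype.ext_iff] at h <;> simp
        exact tl_inj (by simp [tl, h])
      · rintro ⟨v, hv⟩
        rcases v with _ | i | ⟨i, j⟩ | (i | ⟨i, j⟩)
        · rw [show (Sum.inl () : V2 rv) = w0 from rfl, deg_w0] at hv; omega
        · exact i.elim0
        · obtain rfl := fin1 i
          rw [show (Sum.inr (Sum.inr (Sum.inl ((0 : Fin 1), j))) : V2 rv) = sv j from rfl] at hv
          rcases fin2cases j with rfl | rfl
          · rw [deg_sv0] at hv; omega
          · exact ⟨Sum.inl (), rfl⟩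
        · obtain rfl := fin1 i
          rw [show (Sum.inr (Sum.inr (Sum.inr (Sum.inl (0 : Fin 1)))) : V2 rv) = t from rfl,
            deg_t] at hv
          exact absurd hv (by omega)
        · obtain rfl := fin1 i
          exact ⟨Sum.inr j, rfl⟩)
  rw [← this]
  simp [Nat.add_comm]

end Case2
namespace Case2
variable {rv : Fin 1 → ℕ} {k : ℕ} {c : Sym2 (V2 rv) → Fin k}

lemma adj_w0_sv0 : (G2 rv).Adj w0 (sv 0) := adj_iff.2 (Or.inl ⟨rfl, rfl⟩)
lemma adj_sv0_w0 : (G2 rv).Adj (sv 0) w0 := adj_iff.2 (Or.inr (Or.inl ⟨rfl, rfl⟩))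
lemma adj_w0_t : (G2 rv).Adj w0 t := adj_iff.2 (Or.inr (Or.inr (Or.inl ⟨rfl, rfl⟩)))
lemma adj_t_w0 : (G2 rv).Adj t w0 := adj_iff.2 (Or.inr (Or.inr (Or.inr (Or.inl ⟨rfl, rfl⟩))))
lemma adj_sv0_sv1 : (G2 rv).Adj (sv 0) (sv 1) :=
  adj_iff.2 (Or.inr (Or.inr (Or.inr (Or.inr (Or.inl ⟨rfl, rfl⟩)))))
lemma adj_sv1_sv0 : (G2 rv).Adj (sv 1) (sv 0) :=
  adj_iff.2 (Or.inr (Or.inr (Or.inr (Or.inr (Or.inr (Or.inl ⟨rfl, rfl⟩))))))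
lemma adj_t_tl (j : Fin (rv 0)) : (G2 rv).Adj t (tl j) :=
  adj_iff.2 (Or.inr (Or.inr (Or.inr (Or.inr (Or.inr (Or.inr (Or.inl ⟨j, rfl, rfl⟩)))))))
lemma adj_tl_t (j : Fin (rv 0)) : (G2 rv).Adj (tl j) t :=
  adj_iff.2 (Or.inr (Or.inr (Or.inr (Or.inr (Or.inr (Or.inr (Or.inr ⟨j, rfl, rfl⟩)))))))

lemma vne : (w0 : V2 rv) ≠ sv 0 ∧ (w0 : V2 rv) ≠ sv 1 ∧ (w0 : V2 rv) ≠ t ∧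
    (sv 0 : V2 rv) ≠ sv 1 ∧ (sv 0 : V2 rv) ≠ t ∧ (sv 1 : V2 rv) ≠ t := by
  refine ⟨?_, ?_, ?_, ?_, ?_, ?_⟩ <;>
    (intro hh; simp [w0, sv, t, Prod.ext_iff, Fin.ext_iff] at hh)

lemma cs_w0 : cs (G2 rv) c w0 = {c s(w0, sv 0), c s(w0, t)} := by
  ext x
  simp only [cs, Set.mem_setOf_eq, Set.mem_insert_iff, Set.mem_singleton_iff]
  constructor
  · rintro ⟨w, hw, rfl⟩
    rw [adj_iff] at hw
    rcases hw with ⟨h, rfl⟩|⟨h, rfl⟩|⟨h, rfl⟩|⟨h, rfl⟩|⟨h, rfl⟩|⟨h, rfl⟩|⟨j, h, rfl⟩|⟨j, h, rfl⟩ <;>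
      first
        | exact Or.inl rfl
        | exact Or.inr rfl
        | exact absurd h (by intro hh; simp [w0, sv, t, tl, Prod.ext_iff, Fin.ext_iff] at hh)
  · rintro (rfl | rfl)
    · exact ⟨sv 0, adj_w0_sv0, rfl⟩
    · exact ⟨t, adj_w0_t, rfl⟩

lemma cs_sv0 : cs (G2 rv) c (sv 0) = {c s(sv 0, w0), c s(sv 0, sv 1)} := by
  ext x
  simp only [cs, Set.mem_setOf_eq, Set.mem_insert_iff, Set.mem_singleton_iff]
  constructor
  · rintro ⟨w, hw, rfl⟩
    rw [adj_iff] at hw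
    rcases hw with ⟨h, rfl⟩|⟨h, rfl⟩|⟨h, rfl⟩|⟨h, rfl⟩|⟨h, rfl⟩|⟨h, rfl⟩|⟨j, h, rfl⟩|⟨j, h, rfl⟩ <;>
      first
        | exact Or.inl rfl
        | exact Or.inr rfl
        | exact absurd h (by intro hh; simp [w0, sv, t, tl, Prod.ext_iff, Fin.ext_iff] at hh)
  · rintro (rfl | rfl)
    · exact ⟨w0, adj_sv0_w0, rfl⟩
    · exact ⟨sv 1, adj_sv0_sv1, rfl⟩

lemma cs_sv1 : cs (G2 rv) c (sv 1) = {c s(sv 1, sv 0)} := by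
  ext x
  simp only [cs, Set.mem_setOf_eq, Set.mem_singleton_iff]
  constructor
  · rintro ⟨w, hw, rfl⟩
    rw [adj_iff] at hw
    rcases hw with ⟨h, rfl⟩|⟨h, rfl⟩|⟨h, rfl⟩|⟨h, rfl⟩|⟨h, rfl⟩|⟨h, rfl⟩|⟨j, h, rfl⟩|⟨j, h, rfl⟩ <;>
      first
        | rfl
        | exact absurd h (by intro hh; simp [w0, sv, t, tl, Prod.ext_iff, Fin.ext_iff] at hh)
  · rintro rfl
    exact ⟨sv 0, adj_sv1_sv0, rfl⟩

lemma cs_tl (j : Fin (rv 0)) : cs (G2 rv) c (tl j) = {c s(tl j, t)} := by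
  ext x
  simp only [cs, Set.mem_setOf_eq, Set.mem_singleton_iff]
  constructor
  · rintro ⟨w, hw, rfl⟩
    rw [adj_iff] at hw
    rcases hw with ⟨h, rfl⟩|⟨h, rfl⟩|⟨h, rfl⟩|⟨h, rfl⟩|⟨h, rfl⟩|⟨h, rfl⟩|⟨j', h, rfl⟩|⟨j', h, rfl⟩ <;>
      first
        | rfl
        | exact absurd h (by intro hh; simp [w0, sv, t, tl, Prod.ext_iff, Fin.ext_iff] at hh)
  · rintro rfl
    exact ⟨t, adj_tl_t j, rfl⟩

lemma cs_t : cs (G2 rv) c t = {x | x = c s(t, w0) ∨ ∃ j, c s(t, tl j) = x} := by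
  ext x
  simp only [cs, Set.mem_setOf_eq]
  constructor
  · rintro ⟨w, hw, rfl⟩
    rw [adj_iff] at hw
    rcases hw with ⟨h, rfl⟩|⟨h, rfl⟩|⟨h, rfl⟩|⟨h, rfl⟩|⟨h, rfl⟩|⟨h, rfl⟩|⟨j, h, rfl⟩|⟨j, h, rfl⟩ <;>
      first
        | exact Or.inl rfl
        | exact Or.inr ⟨_, rfl⟩
        | exact absurd h (by intro hh; simp [w0, sv, t, tl, Prod.ext_iff, Fin.ext_iff] at hh)
  · rintro (rfl | ⟨j, rfl⟩)
    · exact ⟨w0, adj_t_w0, rfl⟩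
    · exact ⟨tl j, adj_t_tl j, rfl⟩

end Case2
namespace Case2
variable {rv : Fin 1 → ℕ} {k : ℕ}

lemma lower2 {c : Sym2 (V2 rv) → Fin k} (hc : IsVDEC (G2 rv) k c) : rv 0 + 2 ≤ k := by
  obtain ⟨hp, hd'⟩ := hc
  have hd : ∀ u v : V2 rv, u ≠ v → cs (G2 rv) c u ≠ cs (G2 rv) c v := hd'
  set F : Unit ⊕ Fin (rv 0) → Fin k :=
    Sum.elim (fun _ => c s(sv 1, sv 0)) (fun j => c s(tl j, t)) with hF
  have hL : ∀ x : Unit ⊕ Fin (rv 0),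
      cs (G2 rv) c (Sum.elim (fun _ => sv 1) tl x) = {F x} := by
    rintro (x | j)
    · exact cs_sv1
    · exact cs_tl j
  have hLinj : Function.Injective (Sum.elim (fun _ => sv 1) tl : Unit ⊕ Fin (rv 0) → V2 rv) := by
    rintro (a|a) (b|b) h
    · exact congrArg Sum.inl (Subsingleton.elim a b)
    · exact absurd h (by intro hh; simp [sv, tl] at hh)
    · exact absurd h (by intro hh; simp [sv, tl] at hh)
    · exact congrArg Sum.inr (tl_inj h)
  have Finj : Function.Injective F := by
    intro x y hxy
    by_contra hne
    exact hd _ _ (fun hh => hne (hLinj hh)) (by rw [hL x, hL y, hxy])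
  have hcard : rv 0 + 1 ≤ k := by
    have := Fintype.card_le_of_injective F Finj
    simp at this
    omega
  by_contra hlt
  have hk : k = rv 0 + 1 := by omega
  have Fsurj : Function.Surjective F := by
    have : Function.Bijective F := (Fintype.bijective_iff_injective_and_card F).2
      ⟨Finj, by simp [hk]; omega⟩
    exact this.2
  obtain ⟨x, hx⟩ := Fsurj (c s(w0, t))
  rcases x with x | j
  · -- c s(w0,t) = c s(sv 1, sv 0) = c s(sv 0, sv 1)
    have hq : c s(w0, t) = c s(sv 0, sv 1) := by
      rw [← hx]; simp only [hF, Sum.elim_inl]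
      rw [Sym2.eq_swap]
    refine hd w0 (sv 0) vne.1 ?_
    rw [cs_w0, cs_sv0, hq,
      show s(sv 0, (w0 : V2 rv)) = s(w0, (sv 0 : V2 rv)) from Sym2.eq_swap]
  · exfalso
    refine hp adj_t_w0 (adj_t_tl j) (by intro hh; simp [w0, tl] at hh) ?_
    rw [show s(t, (w0 : V2 rv)) = s(w0, (t : V2 rv)) from Sym2.eq_swap, ← hx]
    simp only [hF, Sum.elim_inr]
    rw [Sym2.eq_swap]

def col2 (rv : Fin 1 → ℕ) : V2 rv → V2 rv → Fin (rv 0 + 2)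
  | Sum.inl _, Sum.inr (Sum.inr (Sum.inl _)) => ⟨1, by omega⟩
  | Sum.inr (Sum.inr (Sum.inl _)), Sum.inl _ => ⟨1, by omega⟩
  | Sum.inl _, Sum.inr (Sum.inr (Sum.inr (Sum.inl _))) => ⟨rv 0 + 1, by omega⟩
  | Sum.inr (Sum.inr (Sum.inr (Sum.inl _))), Sum.inl _ => ⟨rv 0 + 1, by omega⟩
  | Sum.inr (Sum.inr (Sum.inl _)), Sum.inr (Sum.inr (Sum.inl _)) => ⟨0, by omega⟩
  | Sum.inr (Sum.inr (Sum.inr (Sum.inl _))), Sum.inr (Sum.inr (Sum.inr (Sum.inr ⟨i, j⟩))) =>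
      ⟨j.val + 1, by
        have h1 := j.isLt
        have h2 : rv i = rv 0 := congrArg rv (fin1 i)
        omega⟩
  | Sum.inr (Sum.inr (Sum.inr (Sum.inr ⟨i, j⟩))), Sum.inr (Sum.inr (Sum.inr (Sum.inl _))) =>
      ⟨j.val + 1, by
        have h1 := j.isLt
        have h2 : rv i = rv 0 := congrArg rv (fin1 i)
        omega⟩
  | _, _ => 0

lemma col2_symm (a b : V2 rv) : col2 rv a b = col2 rv b a := by
  rcases a with _ | a | ⟨i, j⟩ | (a | ⟨ia, ja⟩) <;>
    rcases b with _ | b | ⟨i', j'⟩ | (b | ⟨ib, jb⟩) <;>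
    first
      | rfl
      | exact a.elim0
      | exact b.elim0

noncomputable def c2 (rv : Fin 1 → ℕ) : Sym2 (V2 rv) → Fin (rv 0 + 2) :=
  Sym2.lift ⟨col2 rv, col2_symm⟩

lemma c2_mk (a b : V2 rv) : c2 rv s(a, b) = col2 rv a b := Sym2.lift_mk _ _ _

lemma col2_w0_sv (j : Fin 2) : col2 rv w0 (sv j) = ⟨1, by omega⟩ := rfl
lemma col2_sv_w0 (j : Fin 2) : col2 rv (sv j) w0 = ⟨1, by omega⟩ := rfl
lemma col2_w0_t : col2 rv w0 t = ⟨rv 0 + 1, by omega⟩ := rfl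
lemma col2_t_w0 : col2 rv t w0 = ⟨rv 0 + 1, by omega⟩ := rfl
lemma col2_sv_sv (j j' : Fin 2) : col2 rv (sv j) (sv j') = ⟨0, by omega⟩ := rfl
lemma col2_t_tl (j : Fin (rv 0)) : col2 rv t (tl j) = ⟨j.val + 1, by omega⟩ := rfl
lemma col2_tl_t (j : Fin (rv 0)) : col2 rv (tl j) t = ⟨j.val + 1, by omega⟩ := rfl

end Case2
namespace Case2
variable {rv : Fin 1 → ℕ}

lemma prop2 (hrv : 2 ≤ rv 0) : ∀ ⦃u v w : V2 rv⦄, (G2 rv).Adj u v → (G2 rv).Adj u w →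
    v ≠ w → c2 rv s(u, v) ≠ c2 rv s(u, w) := by
  intro u v w huv huw hvw
  rw [adj_iff] at huv huw
  rw [c2_mk, c2_mk]
  rcases huv with ⟨rfl, rfl⟩|⟨rfl, rfl⟩|⟨rfl, rfl⟩|⟨rfl, rfl⟩|⟨rfl, rfl⟩|⟨rfl, rfl⟩|⟨j, rfl, rfl⟩|⟨j, rfl, rfl⟩ <;>
    rcases huw with ⟨h, rfl⟩|⟨h, rfl⟩|⟨h, rfl⟩|⟨h, rfl⟩|⟨h, rfl⟩|⟨h, rfl⟩|⟨j', h, rfl⟩|⟨j', h, rfl⟩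
  all_goals try (apply absurd h; intro hh; simp [w0, sv, t, tl, Prod.ext_iff, Fin.ext_iff] at hh; done)
  all_goals try have hb1 : j.val < rv 0 := j.isLt
  all_goals try have hb2 : j'.val < rv 0 := j'.isLt
  all_goals try have hb3 : j.val ≠ j'.val := fun hh => hvw (congrArg tl (Fin.ext hh))
  all_goals
    first
      | exact absurd rfl hvw
      | (apply Fin.ne_of_val_ne
         simp only [col2_w0_sv, col2_sv_w0, col2_w0_t, col2_t_w0, col2_sv_sv, col2_t_tl,
           col2_tl_t]
         simp <;> omega)

end Case2
namespace Case2
variable {rv : Fin 1 → ℕ}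

lemma csA2 : cs (G2 rv) (c2 rv) w0 =
    {(⟨1, by omega⟩ : Fin (rv 0 + 2)), ⟨rv 0 + 1, by omega⟩} := by
  rw [cs_w0, c2_mk, c2_mk, col2_w0_sv, col2_w0_t]

lemma csB2 : cs (G2 rv) (c2 rv) (sv 0) =
    {(⟨1, by omega⟩ : Fin (rv 0 + 2)), ⟨0, by omega⟩} := by
  rw [cs_sv0, c2_mk, c2_mk, col2_sv_w0, col2_sv_sv]

lemma csC2 : cs (G2 rv) (c2 rv) (sv 1) = {(⟨0, by omega⟩ : Fin (rv 0 + 2))} := by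
  rw [cs_sv1, c2_mk, col2_sv_sv]

lemma csD2 (j : Fin (rv 0)) : cs (G2 rv) (c2 rv) (tl j) =
    {(⟨j.val + 1, by omega⟩ : Fin (rv 0 + 2))} := by
  rw [cs_tl, c2_mk, col2_tl_t]

lemma csT2 : cs (G2 rv) (c2 rv) t = {x : Fin (rv 0 + 2) | 1 ≤ x.val} := by
  rw [cs_t]
  ext x
  simp only [Set.mem_setOf_eq, c2_mk, col2_t_w0, col2_t_tl]
  constructor
  · rintro (rfl | ⟨j, rfl⟩) <;> simp
  · intro hx
    have hlt := x.isLt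
    rcases Nat.lt_or_ge x.val (rv 0 + 1) with h | h
    · exact Or.inr ⟨⟨x.val - 1, by omega⟩, by apply Fin.ext; simp; omega⟩
    · exact Or.inl (by apply Fin.ext; simp; omega)

lemma shape2 (x : V2 rv) : x = w0 ∨ x = sv 0 ∨ x = sv 1 ∨ x = t ∨ ∃ j, x = tl j := by
  rcases x with _ | i | ⟨i, j⟩ | (i | ⟨i, j⟩)
  · exact Or.inl rfl
  · exact i.elim0
  · obtain rfl := fin1 i
    rcases fin2cases j with rfl | rfl
    · exact Or.inr (Or.inl rfl)
    · exact Or.inr (Or.inr (Or.inl rfl))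
  · obtain rfl := fin1 i
    exact Or.inr (Or.inr (Or.inr (Or.inl rfl)))
  · obtain rfl := fin1 i
    exact Or.inr (Or.inr (Or.inr (Or.inr ⟨j, rfl⟩)))

lemma dist2 (hrv : 2 ≤ rv 0) : ∀ u v : V2 rv, u ≠ v →
    cs (G2 rv) (c2 rv) u ≠ cs (G2 rv) (c2 rv) v := by
  intro u v hne heq
  rcases shape2 u with rfl | rfl | rfl | rfl | ⟨j, rfl⟩ <;>
    rcases shape2 v with rfl | rfl | rfl | rfl | ⟨j', rfl⟩
  all_goals try exact hne rfl
  all_goals try have hb1 : j.val < rv 0 := j.isLt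
  all_goals try have hb2 : j'.val < rv 0 := j'.isLt
  all_goals try have hb3 : j.val ≠ j'.val := fun hh => hne (congrArg tl (Fin.ext hh))
  all_goals simp only [csA2, csB2, csC2, csT2, csD2] at heq
  all_goals first
    | (have hx := Set.ext_iff.mp heq ⟨0, by omega⟩
       simp [Fin.ext_iff] at hx <;> omega)
    | (have hx := Set.ext_iff.mp heq ⟨1, by omega⟩
       simp [Fin.ext_iff] at hx <;> omega)
    | (have hx := Set.ext_iff.mp heq ⟨2, by omega⟩
       simp [Fin.ext_iff] at hx <;> omega)
    | (have hx := Set.ext_iff.mp heq ⟨rv 0 + 1, by omega⟩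
       simp [Fin.ext_iff] at hx <;> omega)
    | (have hx := Set.ext_iff.mp heq ⟨j.val + 1, by omega⟩
       simp [Fin.ext_iff] at hx <;> omega)
    | (have hx := Set.ext_iff.mp heq ⟨1, by omega⟩
       have hy := Set.ext_iff.mp heq ⟨rv 0 + 1, by omega⟩
       simp [Fin.ext_iff] at hx hy <;> omega)
    | (have hx := Set.ext_iff.mp heq ⟨1, by omega⟩
       have hy := Set.ext_iff.mp heq ⟨2, by omega⟩
       simp [Fin.ext_iff] at hx hy <;> omega)

end Case2


lemma Case1.vdecNum1 {r : ℕ} (hr : 1 ≤ r) : vdecNum (Case1.G1 r) = r + 3 := by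
  have hmem : (r + 3) ∈ {k : ℕ | ∃ c : Sym2 (Case1.V1 r) → Fin k, IsVDEC (Case1.G1 r) k c} :=
    ⟨Case1.c1 r, Case1.prop1, Case1.dist1 hr⟩
  refine le_antisymm (Nat.sInf_le hmem) (le_csInf ⟨_, hmem⟩ ?_)
  rintro k ⟨c, hc⟩
  exact Case1.lower1 hc

lemma Case2.vdecNum2 {rv : Fin 1 → ℕ} (hrv : 2 ≤ rv 0) : vdecNum (Case2.G2 rv) = rv 0 + 2 := by
  have hmem : (rv 0 + 2) ∈ {k : ℕ | ∃ c : Sym2 (Case2.V2 rv) → Fin k, IsVDEC (Case2.G2 rv) k c} :=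
    ⟨Case2.c2 rv, Case2.prop2 hrv, Case2.dist2 hrv⟩
  refine le_antisymm (Nat.sInf_le hmem) (le_csInf ⟨_, hmem⟩ ?_)
  rintro k ⟨c, hc⟩
  exact Case2.lower2 hc

/-- A tree isomorphic to `Q(r,2,0)` with `r ≥ 1` or to `Q(0,1,1)` satisfies
`χ'ₛ(T) = n₁(T) + 1`. -/
theorem vdecNum_of_exceptional_trees {V : Type*} [Fintype V] (G : SimpleGraph V)
    (h : (∃ r : ℕ, 1 ≤ r ∧ Nonempty (G ≃g QGraph r 2 0 Fin.elim0)) ∨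
         (∃ rv : Fin 1 → ℕ, 2 ≤ rv 0 ∧ Nonempty (G ≃g QGraph 0 1 1 rv))) :
    vdecNum G = numDeg G 1 + 1 := by
  rcases h with ⟨r, hr, ⟨e⟩⟩ | ⟨rv, hrv, ⟨e⟩⟩
  · rw [vdecNum_congr e, numDeg_congr e 1, Case1.numDeg1, Case1.vdecNum1 hr]
  · rw [vdecNum_congr e, numDeg_congr e 1, Case2.numDeg2 hrv, Case2.vdecNum2 hrv]
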